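/- arXiv:1005.1625 — 2 statements merged into one kernel-verified Lean document; each statement's English description precedes it below -/
import Mathlib

section
/- Let A₁, B₁, C₁ be a non-overlapping Napoleon configuration for a nondegenerate triangle ABC in the Euclidean plane. Then the three lines AA₁, BB₁ and CC₁ are concurrent: there exists a point J lying on the line through A and A₁, on the line through B and B₁, and on the line through C and C₁. -/
open EuclideanGeometry AffineSubspace MeasureTheory

private lemma nap_aux1 {w0 w1 z0 z1 : ℝ} (hw : w0 ≠ 0 ∨ w1 ≠ 0)
    (h : w0 * z1 - w1 * z0 = 0) : ∃ r : ℝ, z0 = r * w0 ∧ z1 = r * w1 := by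
  have hn : 0 < w0 ^ 2 + w1 ^ 2 := by
    rcases hw with hw | hw <;> positivity
  refine ⟨(z0 * w0 + z1 * w1) / (w0 ^ 2 + w1 ^ 2), ?_, ?_⟩
  · field_simp
    linear_combination (-w1) * h
  · field_simp
    linear_combination w0 * h

private lemma nap_ne_coord {P Q : EuclideanSpace ℝ (Fin 2)} (h : P ≠ Q) :
    Q 0 - P 0 ≠ 0 ∨ Q 1 - P 1 ≠ 0 := by
  by_contra hc
  push_neg at hc
  exact h (by ext i; fin_cases i <;> simp <;> linarith [hc.1, hc.2])

private lemma nap_mem_line {P Q Z : EuclideanSpace ℝ (Fin 2)} (hPQ : P ≠ Q)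
    (h : (Q 0 - P 0) * (Z 1 - P 1) - (Q 1 - P 1) * (Z 0 - P 0) = 0) :
    Z ∈ line[ℝ, P, Q] := by
  obtain ⟨r, hr0, hr1⟩ := nap_aux1 (nap_ne_coord hPQ) h
  have : Z = r • (Q -ᵥ P) +ᵥ P := by
    ext i; fin_cases i
    · show Z 0 = r * (Q 0 - P 0) + P 0; linarith
    · show Z 1 = r * (Q 1 - P 1) + P 1; linarith
  rw [this]
  exact smul_vsub_vadd_mem_affineSpan_pair r P Q

private lemma nap_cross_of_mem {P Q Z : EuclideanSpace ℝ (Fin 2)}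
    (h : Z ∈ line[ℝ, P, Q]) :
    (Q 0 - P 0) * (Z 1 - P 1) - (Q 1 - P 1) * (Z 0 - P 0) = 0 := by
  have hv : Z -ᵥ P ∈ vectorSpan ℝ ({P, Q} : Set _) := by
    rw [← direction_affineSpan]
    exact AffineSubspace.vsub_mem_direction h (left_mem_affineSpan_pair ℝ P Q)
  rw [mem_vectorSpan_pair_rev] at hv
  obtain ⟨r, hr⟩ := hv
  have h0 := congrArg (fun v => v 0) hr
  have h1 := congrArg (fun v => v 1) hr
  have e0 : r * (Q 0 - P 0) = Z 0 - P 0 := h0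
  have e1 : r * (Q 1 - P 1) = Z 1 - P 1 := h1
  linear_combination (Q 1 - P 1) * e0 - (Q 0 - P 0) * e1

private lemma nap_side {P Q X Y : EuclideanSpace ℝ (Fin 2)} (hPQ : P ≠ Q)
    (h : (affineSpan ℝ ({P, Q} : Set _)).SOppSide X Y) :
    ((Q 0 - P 0) * (X 1 - P 1) - (Q 1 - P 1) * (X 0 - P 0)) *
      ((Q 0 - P 0) * (Y 1 - P 1) - (Q 1 - P 1) * (Y 0 - P 0)) < 0 := by
  rw [sOppSide_iff_exists_left (left_mem_affineSpan_pair ℝ P Q)] at h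
  obtain ⟨hX, hY, p₂, hp₂, hray⟩ := h
  set fX := (Q 0 - P 0) * (X 1 - P 1) - (Q 1 - P 1) * (X 0 - P 0) with hfX
  set fY := (Q 0 - P 0) * (Y 1 - P 1) - (Q 1 - P 1) * (Y 0 - P 0) with hfY
  have hfX0 : fX ≠ 0 := fun h0 => hX (nap_mem_line hPQ h0)
  have hfY0 : fY ≠ 0 := fun h0 => hY (nap_mem_line hPQ h0)
  -- p₂ on the line
  have hp0 : (Q 0 - P 0) * (p₂ 1 - P 1) - (Q 1 - P 1) * (p₂ 0 - P 0) = 0 :=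
    nap_cross_of_mem hp₂
  rcases hray with hz | hz | ⟨r₁, r₂, hr₁, hr₂, hr⟩
  · exfalso; apply hX
    have : X = P := by
      have := congrArg (· +ᵥ P) hz
      simpa using this
    rw [this]; exact left_mem_affineSpan_pair ℝ P Q
  · exfalso; exact hY ((vsub_eq_zero_iff_eq.mp hz) ▸ hp₂)
  · have e0 : r₁ * (X 0 - P 0) = r₂ * (p₂ 0 - Y 0) := congrArg (fun v => v 0) hr
    have e1 : r₁ * (X 1 - P 1) = r₂ * (p₂ 1 - Y 1) := congrArg (fun v => v 1) hr
    have key : r₁ * fX = -(r₂ * fY) := by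
      rw [hfX, hfY]
      linear_combination (Q 0 - P 0) * e1 - (Q 1 - P 1) * e0 + r₂ * hp0
    have hfY2 : 0 < fY ^ 2 := lt_of_le_of_ne (sq_nonneg fY) (Ne.symm (pow_ne_zero 2 hfY0))
    have key2 : r₁ * (fX * fY) = -(r₂ * fY ^ 2) := by linear_combination fY * key
    nlinarith [key2, mul_pos hr₂ hfY2, hr₁]

private lemma nap_dist_sq (x y : EuclideanSpace ℝ (Fin 2)) :
    dist x y ^ 2 = (x 0 - y 0) ^ 2 + (x 1 - y 1) ^ 2 := by
  rw [EuclideanSpace.dist_eq, Real.sq_sqrt (by positivity)]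
  simp [Fin.sum_univ_two, Real.dist_eq, sq_abs]

private lemma nap_apex {P Q X : EuclideanSpace ℝ (Fin 2)} (hPQ : P ≠ Q)
    (h1 : dist X P = dist P Q) (h2 : dist X Q = dist P Q) :
    ∃ κ : ℝ, κ ^ 2 = 3 / 4 ∧
      X 0 = (P 0 + Q 0) / 2 - κ * (Q 1 - P 1) ∧
      X 1 = (P 1 + Q 1) / 2 + κ * (Q 0 - P 0) := by
  have hs1 : (X 0 - P 0) ^ 2 + (X 1 - P 1) ^ 2 = (P 0 - Q 0) ^ 2 + (P 1 - Q 1) ^ 2 := by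
    rw [← nap_dist_sq, ← nap_dist_sq, h1]
  have hs2 : (X 0 - Q 0) ^ 2 + (X 1 - Q 1) ^ 2 = (P 0 - Q 0) ^ 2 + (P 1 - Q 1) ^ 2 := by
    rw [← nap_dist_sq, ← nap_dist_sq, h2]
  set p0 := X 0 - (P 0 + Q 0) / 2 with hp0
  set p1 := X 1 - (P 1 + Q 1) / 2 with hp1
  set w0 := Q 0 - P 0 with hw0
  set w1 := Q 1 - P 1 with hw1
  have hdot : p0 * w0 + p1 * w1 = 0 := by
    rw [hp0, hp1, hw0, hw1]; linear_combination (hs1 - hs2) / 2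
  have hnorm : p0 ^ 2 + p1 ^ 2 = 3 / 4 * (w0 ^ 2 + w1 ^ 2) := by
    rw [hp0, hp1, hw0, hw1]; linear_combination (hs1 + hs2) / 2
  have hw : -w1 ≠ 0 ∨ w0 ≠ 0 := by
    rcases nap_ne_coord hPQ with h | h
    · exact Or.inr h
    · exact Or.inl (by simpa using h)
  obtain ⟨κ, hk0, hk1⟩ := nap_aux1 (w0 := -w1) (w1 := w0) (z0 := p0) (z1 := p1) hw
    (by linear_combination -hdot)
  have hwpos : 0 < w0 ^ 2 + w1 ^ 2 := by
    rcases nap_ne_coord hPQ with h | h <;> rw [hw0, hw1] <;> positivity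
  refine ⟨κ, ?_, by rw [hp0] at hk0; linarith [hk0], by rw [hp1] at hk1; linarith [hk1]⟩
  have : κ ^ 2 * (w0 ^ 2 + w1 ^ 2) = 3 / 4 * (w0 ^ 2 + w1 ^ 2) := by
    linear_combination hnorm + (κ * w1 - p0) * hk0 - (κ * w0 + p1) * hk1
  exact mul_right_cancel₀ (ne_of_gt hwpos) this

set_option maxHeartbeats 2000000 in
theorem napoleon_concurrent_lines
    (A B C A₁ B₁ C₁ : EuclideanSpace ℝ (Fin 2))
    (hABC : AffineIndependent ℝ ![A, B, C])
    (hA₁ : dist A₁ B = dist B C) (hA₁' : dist A₁ C = dist B C)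
    (hB₁ : dist A B₁ = dist A C) (hB₁' : dist B₁ C = dist A C)
    (hC₁ : dist A C₁ = dist A B) (hC₁' : dist B C₁ = dist A B)
    (hsideA : (affineSpan ℝ {B, C}).SOppSide A A₁)
    (hsideB : (affineSpan ℝ {C, A}).SOppSide B B₁)
    (hsideC : (affineSpan ℝ {A, B}).SOppSide C C₁)
    : ∃ J : EuclideanSpace ℝ (Fin 2),
      J ∈ line[ℝ, A, A₁] ∧ J ∈ line[ℝ, B, B₁] ∧ J ∈ line[ℝ, C, C₁] := by
  -- nondegeneracy
  have hNC : ¬ Collinear ℝ ({A, B, C} : Set _) :=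
    affineIndependent_iff_not_collinear_set.mp hABC
  have hD : (B 0 - A 0) * (C 1 - A 1) - (B 1 - A 1) * (C 0 - A 0) ≠ 0 := by
    intro h0
    apply hNC
    by_cases hAB : A = B
    · have hset : ({A, B, C} : Set _) = {B, C} := by rw [hAB]; simp
      rw [hset]; exact collinear_pair ℝ B C
    · have hC : C ∈ line[ℝ, A, B] := nap_mem_line hAB h0
      have hcol := collinear_insert_of_mem_affineSpan_pair hC
      have hset : ({A, B, C} : Set _) = {C, A, B} := by ext x; simp; tauto
      rw [hset]; exact hcol
  have hAB : A ≠ B := by intro h; apply hD; rw [h]; ring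
  have hBC : B ≠ C := by intro h; apply hD; rw [h]; ring
  have hCA : C ≠ A := by intro h; apply hD; rw [← h]; ring
  -- apexes
  obtain ⟨kA, hkA2, hA10, hA11⟩ := nap_apex hBC hA₁ hA₁'
  obtain ⟨kB, hkB2, hB10, hB11⟩ := nap_apex hCA
    (by rw [hB₁', dist_comm A C]) (by rw [dist_comm B₁ A, hB₁, dist_comm A C])
  obtain ⟨kC, hkC2, hC10, hC11⟩ := nap_apex hAB
    (by rw [dist_comm C₁ A, hC₁]) (by rw [dist_comm C₁ B, hC₁'])
  -- side conditions
  have sA := nap_side hBC hsideA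
  have sB := nap_side hCA hsideB
  have sC := nap_side hAB hsideC
  have hBB₁ : B ≠ B₁ := by
    intro h; rw [← h] at sB
    linarith [mul_self_nonneg ((A 0 - C 0) * (B 1 - C 1) - (A 1 - C 1) * (B 0 - C 0))]
  have hCC₁ : C ≠ C₁ := by
    intro h; rw [← h] at sC
    linarith [mul_self_nonneg ((B 0 - A 0) * (C 1 - A 1) - (B 1 - A 1) * (C 0 - A 0))]
  -- sign of each k
  have hkAD : kA * ((B 0 - A 0) * (C 1 - A 1) - (B 1 - A 1) * (C 0 - A 0)) < 0 := by
    have h1 : (C 0 - B 0) * (A₁ 1 - B 1) - (C 1 - B 1) * (A₁ 0 - B 0)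
        = kA * ((C 0 - B 0) ^ 2 + (C 1 - B 1) ^ 2) := by rw [hA10, hA11]; ring
    have h2 : (C 0 - B 0) * (A 1 - B 1) - (C 1 - B 1) * (A 0 - B 0)
        = (B 0 - A 0) * (C 1 - A 1) - (B 1 - A 1) * (C 0 - A 0) := by ring
    rw [h1, h2] at sA
    have hn : 0 < (C 0 - B 0) ^ 2 + (C 1 - B 1) ^ 2 := by
      rcases nap_ne_coord hBC with h | h <;> positivity
    by_contra hcon
    push_neg at hcon
    have h3 := mul_nonneg hcon hn.le
    have h4 : kA * ((B 0 - A 0) * (C 1 - A 1) - (B 1 - A 1) * (C 0 - A 0)) *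
        ((C 0 - B 0) ^ 2 + (C 1 - B 1) ^ 2)
        = ((B 0 - A 0) * (C 1 - A 1) - (B 1 - A 1) * (C 0 - A 0)) *
          (kA * ((C 0 - B 0) ^ 2 + (C 1 - B 1) ^ 2)) := by ring
    linarith [sA, h3, h4]
  have hkBD : kB * ((B 0 - A 0) * (C 1 - A 1) - (B 1 - A 1) * (C 0 - A 0)) < 0 := by
    have h1 : (A 0 - C 0) * (B₁ 1 - C 1) - (A 1 - C 1) * (B₁ 0 - C 0)
        = kB * ((A 0 - C 0) ^ 2 + (A 1 - C 1) ^ 2) := by rw [hB10, hB11]; ring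
    have h2 : (A 0 - C 0) * (B 1 - C 1) - (A 1 - C 1) * (B 0 - C 0)
        = (B 0 - A 0) * (C 1 - A 1) - (B 1 - A 1) * (C 0 - A 0) := by ring
    rw [h1, h2] at sB
    have hn : 0 < (A 0 - C 0) ^ 2 + (A 1 - C 1) ^ 2 := by
      rcases nap_ne_coord hCA with h | h <;> positivity
    by_contra hcon
    push_neg at hcon
    have h3 := mul_nonneg hcon hn.le
    have h4 : kB * ((B 0 - A 0) * (C 1 - A 1) - (B 1 - A 1) * (C 0 - A 0)) *
        ((A 0 - C 0) ^ 2 + (A 1 - C 1) ^ 2)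
        = ((B 0 - A 0) * (C 1 - A 1) - (B 1 - A 1) * (C 0 - A 0)) *
          (kB * ((A 0 - C 0) ^ 2 + (A 1 - C 1) ^ 2)) := by ring
    linarith [sB, h3, h4]
  have hkCD : kC * ((B 0 - A 0) * (C 1 - A 1) - (B 1 - A 1) * (C 0 - A 0)) < 0 := by
    have h1 : (B 0 - A 0) * (C₁ 1 - A 1) - (B 1 - A 1) * (C₁ 0 - A 0)
        = kC * ((B 0 - A 0) ^ 2 + (B 1 - A 1) ^ 2) := by rw [hC10, hC11]; ring
    rw [h1] at sC
    have hn : 0 < (B 0 - A 0) ^ 2 + (B 1 - A 1) ^ 2 := by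
      rcases nap_ne_coord hAB with h | h <;> positivity
    by_contra hcon
    push_neg at hcon
    have h3 := mul_nonneg hcon hn.le
    have h4 : kC * ((B 0 - A 0) * (C 1 - A 1) - (B 1 - A 1) * (C 0 - A 0)) *
        ((B 0 - A 0) ^ 2 + (B 1 - A 1) ^ 2)
        = ((B 0 - A 0) * (C 1 - A 1) - (B 1 - A 1) * (C 0 - A 0)) *
          (kC * ((B 0 - A 0) ^ 2 + (B 1 - A 1) ^ 2)) := by ring
    linarith [sC, h3, h4]
  -- the three k's agree
  have keq : ∀ k1 k2 : ℝ, k1 ^ 2 = 3 / 4 → k2 ^ 2 = 3 / 4 →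
      k1 * ((B 0 - A 0) * (C 1 - A 1) - (B 1 - A 1) * (C 0 - A 0)) < 0 →
      k2 * ((B 0 - A 0) * (C 1 - A 1) - (B 1 - A 1) * (C 0 - A 0)) < 0 → k1 = k2 := by
    intro k1 k2 h1 h2 h3 h4
    have hm := mul_pos_of_neg_of_neg h3 h4
    have hpos : 0 < k1 * k2 := by
      by_contra hcon
      push_neg at hcon
      have h5 := mul_nonneg (neg_nonneg.mpr hcon)
        (sq_nonneg ((B 0 - A 0) * (C 1 - A 1) - (B 1 - A 1) * (C 0 - A 0)))
      have h6 : -(k1 * k2) * ((B 0 - A 0) * (C 1 - A 1) - (B 1 - A 1) * (C 0 - A 0)) ^ 2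
          = -((k1 * ((B 0 - A 0) * (C 1 - A 1) - (B 1 - A 1) * (C 0 - A 0))) *
            (k2 * ((B 0 - A 0) * (C 1 - A 1) - (B 1 - A 1) * (C 0 - A 0)))) := by ring
      linarith [hm, h5, h6]
    have h4' : (k1 * k2 - 3 / 4) * (k1 * k2 + 3 / 4) = 0 := by
      linear_combination k2 ^ 2 * h1 + (3 / 4 : ℝ) * h2
    rcases mul_eq_zero.mp h4' with h5 | h5
    · have h6 : (k1 - k2) ^ 2 = 0 := by linear_combination h1 + h2 - 2 * h5
      have h7 : k1 - k2 = 0 := by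
        have := sq_eq_zero_iff.mp h6
        exact this
      linarith
    · linarith
  have hkAB2 : kB = kA := keq kB kA hkB2 hkA2 hkBD hkAD
  have hkAC2 : kC = kA := keq kC kA hkC2 hkA2 hkCD hkAD
  rw [hkAB2] at hB10 hB11
  rw [hkAC2] at hC10 hC11
  -- δ and t
  obtain ⟨δ, hδdef⟩ : ∃ δ : ℝ, δ =
      -(3/2) * ((B 0 - A 0) * (C 1 - A 1) - (B 1 - A 1) * (C 0 - A 0)) +
      kA / 2 * ((A 0 - B 0) ^ 2 + (A 1 - B 1) ^ 2 + (B 0 - C 0) ^ 2 + (B 1 - C 1) ^ 2 +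
        (C 0 - A 0) ^ 2 + (C 1 - A 1) ^ 2) := ⟨_, rfl⟩
  have hS : 0 < (A 0 - B 0) ^ 2 + (A 1 - B 1) ^ 2 + (B 0 - C 0) ^ 2 + (B 1 - C 1) ^ 2 +
      (C 0 - A 0) ^ 2 + (C 1 - A 1) ^ 2 := by
    rcases nap_ne_coord hAB with h | h
    · have h1 : 0 < (A 0 - B 0) ^ 2 := by
        have : A 0 - B 0 ≠ 0 := fun hc => h (by linarith)
        positivity
      linarith [h1, sq_nonneg (A 1 - B 1), sq_nonneg (B 0 - C 0), sq_nonneg (B 1 - C 1),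
        sq_nonneg (C 0 - A 0), sq_nonneg (C 1 - A 1)]
    · have h1 : 0 < (A 1 - B 1) ^ 2 := by
        have : A 1 - B 1 ≠ 0 := fun hc => h (by linarith)
        positivity
      linarith [h1, sq_nonneg (A 0 - B 0), sq_nonneg (B 0 - C 0), sq_nonneg (B 1 - C 1),
        sq_nonneg (C 0 - A 0), sq_nonneg (C 1 - A 1)]
  have hδ : δ ≠ 0 := by
    have he : δ * kA = -(3/2) * (kA * ((B 0 - A 0) * (C 1 - A 1) - (B 1 - A 1) * (C 0 - A 0)))
        + (3/8) * ((A 0 - B 0) ^ 2 + (A 1 - B 1) ^ 2 + (B 0 - C 0) ^ 2 + (B 1 - C 1) ^ 2 +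
          (C 0 - A 0) ^ 2 + (C 1 - A 1) ^ 2) := by
      rw [hδdef]
      linear_combination (((A 0 - B 0) ^ 2 + (A 1 - B 1) ^ 2 + (B 0 - C 0) ^ 2 + (B 1 - C 1) ^ 2 +
          (C 0 - A 0) ^ 2 + (C 1 - A 1) ^ 2) / 2) * hkA2
    have hpos : 0 < δ * kA := by rw [he]; linarith [hkAD, hS]
    intro h0
    rw [h0, zero_mul] at hpos
    exact lt_irrefl 0 hpos
  obtain ⟨t, htdef⟩ : ∃ t : ℝ, t =
      ((B₁ 0 - B 0) * (B 1 - A 1) - (B₁ 1 - B 1) * (B 0 - A 0)) / δ := ⟨_, rfl⟩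
  have hδt : δ * t = (B₁ 0 - B 0) * (B 1 - A 1) - (B₁ 1 - B 1) * (B 0 - A 0) := by
    rw [htdef]
    field_simp
  rw [hB10, hB11] at hδt
  refine ⟨t • (A₁ -ᵥ A) +ᵥ A, smul_vsub_vadd_mem_affineSpan_pair t A A₁, ?_, ?_⟩
  · apply nap_mem_line hBB₁
    have hJ0 : (t • (A₁ -ᵥ A) +ᵥ A) 0 = t * (A₁ 0 - A 0) + A 0 := rfl
    have hJ1 : (t • (A₁ -ᵥ A) +ᵥ A) 1 = t * (A₁ 1 - A 1) + A 1 := rfl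
    rw [hJ0, hJ1, hA10, hA11, hB10, hB11]
    refine mul_left_cancel₀ hδ ?_
    linear_combination (((C 0 + A 0)/2 - kA*(A 1 - C 1) - B 0)*((B 1 + C 1)/2 + kA*(C 0 - B 0) - A 1) - ((C 1 + A 1)/2 + kA*(A 0 - C 0) - B 1)*((B 0 + C 0)/2 - kA*(C 1 - B 1) - A 0)) * hδt + (((C 0 + A 0)/2 - kA*(A 1 - C 1) - B 0)*(A 1 - B 1) - ((C 1 + A 1)/2 + kA*(A 0 - C 0) - B 1)*(A 0 - B 0)) * hδdef + ((((C 0 + A 0)/2 - kA*(A 1 - C 1) - B 0)*(A 1 - B 1) - ((C 1 + A 1)/2 + kA*(A 0 - C 0) - B 1)*(A 0 - B 0)) * ((B 0 - A 0)*(C 1 - A 1) - (B 1 - A 1)*(C 0 - A 0))) * hkA2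
  · apply nap_mem_line hCC₁
    have hJ0 : (t • (A₁ -ᵥ A) +ᵥ A) 0 = t * (A₁ 0 - A 0) + A 0 := rfl
    have hJ1 : (t • (A₁ -ᵥ A) +ᵥ A) 1 = t * (A₁ 1 - A 1) + A 1 := rfl
    rw [hJ0, hJ1, hA10, hA11, hC10, hC11]
    refine mul_left_cancel₀ hδ ?_
    linear_combination (((A 0 + B 0)/2 - kA*(B 1 - A 1) - C 0)*((B 1 + C 1)/2 + kA*(C 0 - B 0) - A 1) - ((A 1 + B 1)/2 + kA*(B 0 - A 0) - C 1)*((B 0 + C 0)/2 - kA*(C 1 - B 1) - A 0)) * hδt + (((A 0 + B 0)/2 - kA*(B 1 - A 1) - C 0)*(A 1 - C 1) - ((A 1 + B 1)/2 + kA*(B 0 - A 0) - C 1)*(A 0 - C 0)) * hδdef + ((((A 0 + B 0)/2 - kA*(B 1 - A 1) - C 0)*(A 1 - C 1) - ((A 1 + B 1)/2 + kA*(B 0 - A 0) - C 1)*(A 0 - C 0)) * ((B 0 - A 0)*(C 1 - A 1) - (B 1 - A 1)*(C 0 - A 0))) * hkA2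
end

section
/- Let A₁, B₁, C₁ be a non-overlapping Napoleon configuration for a nondegenerate triangle ABC in the Euclidean plane, and let G₁, G₂, G₃ be the centroids of A₁BC, AB₁C, ABC₁ respectively. Then the area of triangle G₁G₂G₃ equals one half of the area of triangle ABC plus one sixth of the sum of the areas of the three equilateral triangles: Area(G₁G₂G₃) = (1/2)·Area(ABC) + (1/6)·(Area(A₁BC) + Area(AB₁C) + Area(ABC₁)). -/
open EuclideanGeometry AffineSubspace MeasureTheory Set

noncomputable def triArea (X Y Z : EuclideanSpace ℝ (Fin 2)) : ℝ :=
  (volume (convexHull ℝ {X, Y, Z})).toReal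


noncomputable def cr (u v : EuclideanSpace ℝ (Fin 2)) : ℝ := u 0 * v 1 - u 1 * v 0

lemma mem_tri {u w z : EuclideanSpace ℝ (Fin 2)} :
    z ∈ convexHull ℝ ({0, u, w} : Set (EuclideanSpace ℝ (Fin 2))) ↔
      ∃ b c : ℝ, 0 ≤ b ∧ 0 ≤ c ∧ b + c ≤ 1 ∧ z = b • u + c • w := by
  rw [convexHull_insert (by simp : ({u, w} : Set (EuclideanSpace ℝ (Fin 2))).Nonempty),
    convexHull_pair, mem_convexJoin]
  constructor
  · rintro ⟨x, hx, p, hp, hz⟩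
    rw [mem_singleton_iff] at hx
    subst hx
    obtain ⟨a, b, ha, hb, hab, rfl⟩ := hp
    rw [segment_eq_image] at hz
    obtain ⟨t, ht, rfl⟩ := hz
    refine ⟨t * a, t * b, mul_nonneg ht.1 ha, mul_nonneg ht.1 hb, ?_, ?_⟩
    · nlinarith [ht.1, ht.2]
    · simp only [smul_zero, sub_smul, one_smul, smul_add, smul_smul]
      module
  · rintro ⟨b, c, hb, hc, hbc, rfl⟩
    by_cases h : b + c = 0
    · have hb0 : b = 0 := by linarith
      have hc0 : c = 0 := by linarith
      refine ⟨0, rfl, u, left_mem_segment ℝ u w, ?_⟩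
      have hz : b • u + c • w = (0 : EuclideanSpace ℝ (Fin 2)) := by simp [hb0, hc0]
      rw [hz]
      exact left_mem_segment ℝ 0 u
    · have hpos : 0 < b + c := lt_of_le_of_ne (by linarith) (Ne.symm h)
      have hθ : c / (b + c) ∈ Icc (0:ℝ) 1 := by
        constructor
        · positivity
        · rw [div_le_one hpos]; linarith
      refine ⟨0, rfl, (1 - c/(b+c)) • u + (c/(b+c)) • w, ?_, ?_⟩
      · rw [segment_eq_image]
        exact ⟨c/(b+c), hθ, rfl⟩
      · rw [segment_eq_image]
        refine ⟨b + c, ⟨by linarith, hbc⟩, ?_⟩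
        have h1 : (1 : ℝ) - c/(b+c) = b/(b+c) := by field_simp; ring
        rw [h1]
        simp only [smul_zero, smul_add, smul_smul]
        rw [mul_div_cancel₀ _ h, mul_div_cancel₀ _ h]
        module

lemma coord_unique {u w : EuclideanSpace ℝ (Fin 2)} (h : cr u w ≠ 0) {b c b' c' : ℝ}
    (heq : b • u + c • w = b' • u + c' • w) : b = b' ∧ c = c' := by
  have h0 := congrArg (fun v => v 0) heq
  have h1 := congrArg (fun v => v 1) heq
  simp only [PiLp.add_apply, PiLp.smul_apply, smul_eq_mul] at h0 h1
  simp only [cr] at h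
  have hbb : (b - b') * (u 0 * w 1 - u 1 * w 0) = 0 := by linear_combination w 1 * h0 - w 0 * h1
  have hcc : (c - c') * (u 0 * w 1 - u 1 * w 0) = 0 := by linear_combination u 0 * h1 - u 1 * h0
  constructor
  · rcases mul_eq_zero.1 hbb with h' | h'
    · linarith [sub_eq_zero.1 h']
    · exact absurd h' h
  · rcases mul_eq_zero.1 hcc with h' | h'
    · linarith [sub_eq_zero.1 h']
    · exact absurd h' h


lemma vol_par (u w : EuclideanSpace ℝ (Fin 2)) :
    volume (parallelepiped ![u, w]) = ENNReal.ofReal |cr u w| := by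
  rw [← (EuclideanSpace.basisFun (Fin 2) ℝ).addHaar_eq_volume,
    MeasureTheory.Measure.addHaar_parallelepiped]
  congr 2
  rw [Module.Basis.det_apply, Matrix.det_fin_two]
  simp [Module.Basis.toMatrix_apply, EuclideanSpace.basisFun_repr, cr]
  ring

lemma null_segment (u w : EuclideanSpace ℝ (Fin 2)) : volume (segment ℝ u w) = 0 := by
  have hsub : segment ℝ u w ⊆ (affineSpan ℝ {u, w} : Set (EuclideanSpace ℝ (Fin 2))) := by
    rw [← convexHull_pair]
    exact convexHull_subset_affineSpan _
  refine measure_mono_null hsub (MeasureTheory.Measure.addHaar_affineSubspace _ _ ?_)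
  intro htop
  have hdir : (affineSpan ℝ ({u, w} : Set (EuclideanSpace ℝ (Fin 2)))).direction = ⊤ := by
    rw [htop]; exact AffineSubspace.direction_top ℝ _ _
  rw [direction_affineSpan, vectorSpan_pair ℝ u w] at hdir
  have h2 : Module.finrank ℝ (EuclideanSpace ℝ (Fin 2)) = 2 := by
    simp [finrank_euclideanSpace]
  by_cases h0 : u -ᵥ w = 0
  · rw [h0] at hdir
    simp only [Submodule.span_zero_singleton] at hdir
    exact absurd hdir bot_ne_top
  · have h1 := finrank_span_singleton (K := ℝ) h0
    rw [hdir, finrank_top, h2] at h1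
    omega

lemma vol_tri0 (u w : EuclideanSpace ℝ (Fin 2)) (h : cr u w ≠ 0) :
    (volume (convexHull ℝ ({0, u, w} : Set (EuclideanSpace ℝ (Fin 2))))).toReal
      = |cr u w| / 2 := by
  set T := convexHull ℝ ({0, u, w} : Set (EuclideanSpace ℝ (Fin 2))) with hT
  have hTcompact : IsCompact T :=
    ((Set.finite_singleton w).insert u |>.insert 0).isCompact_convexHull ℝ
  have hTm : MeasurableSet T := hTcompact.isClosed.measurableSet
  set T' := (fun x : EuclideanSpace ℝ (Fin 2) => (u + w) - x) ⁻¹' T with hT'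
  have hT'm : MeasurableSet T' := hTm.preimage (by fun_prop)
  have hvolT' : volume T' = volume T := by
    have hco : (fun x : EuclideanSpace ℝ (Fin 2) => (u + w) - x)
        = (fun x : EuclideanSpace ℝ (Fin 2) => (u + w) + x) ∘ (fun x => -x) := by
      funext x; simp [sub_eq_add_neg]
    rw [hT', hco, Set.preimage_comp, MeasureTheory.Measure.measure_preimage_neg,
      measure_preimage_add]
  have hPT : parallelepiped ![u, w] = T ∪ T' := by
    apply Set.Subset.antisymm
    · intro x hx
      rw [mem_parallelepiped_iff] at hx
      obtain ⟨t, ht, rfl⟩ := hx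
      have ht0 : 0 ≤ t 0 ∧ t 0 ≤ 1 := ⟨ht.1 0, ht.2 0⟩
      have ht1 : 0 ≤ t 1 ∧ t 1 ≤ 1 := ⟨ht.1 1, ht.2 1⟩
      have hsum : (∑ i, t i • ![u, w] i) = t 0 • u + t 1 • w := by
        simp [Fin.sum_univ_two]
      rw [hsum]
      by_cases hc : t 0 + t 1 ≤ 1
      · exact Or.inl (mem_tri.2 ⟨t 0, t 1, ht0.1, ht1.1, hc, rfl⟩)
      · refine Or.inr ?_
        rw [hT', Set.mem_preimage]
        refine mem_tri.2 ⟨1 - t 0, 1 - t 1, by linarith, by linarith, by linarith, ?_⟩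
        simp only [sub_smul, one_smul]
        module
    · intro x hx
      rw [mem_parallelepiped_iff]
      rcases hx with hx | hx
      · obtain ⟨b, c, hb, hc, hbc, rfl⟩ := mem_tri.1 hx
        refine ⟨![b, c], ⟨fun i => ?_, fun i => ?_⟩, ?_⟩
        · fin_cases i <;> simpa
        · fin_cases i <;> simp <;> linarith
        · simp [Fin.sum_univ_two]
      · rw [hT', Set.mem_preimage] at hx
        obtain ⟨b, c, hb, hc, hbc, hx⟩ := mem_tri.1 hx
        refine ⟨![1 - b, 1 - c], ⟨fun i => ?_, fun i => ?_⟩, ?_⟩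
        · fin_cases i <;> simp <;> linarith
        · fin_cases i <;> simp <;> linarith
        · simp only [Fin.sum_univ_two, Matrix.cons_val_zero, Matrix.cons_val_one, Matrix.head_cons]
          have hxx : x = (u + w) - (b • u + c • w) := by
            rw [← hx]; module
          rw [hxx]; module
  have hinter : volume (T ∩ T') = 0 := by
    refine measure_mono_null ?_ (null_segment u w)
    intro x ⟨hx1, hx2⟩
    obtain ⟨b, c, hb, hc, hbc, rfl⟩ := mem_tri.1 hx1
    rw [hT', Set.mem_preimage] at hx2
    obtain ⟨b', c', hb', hc', hbc', hx'⟩ := mem_tri.1 hx2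
    have heq : (1 - b') • u + (1 - c') • w = b • u + c • w := by
      have h3 : (u + w) - (b • u + c • w) = b' • u + c' • w := hx'
      have h4 : b • u + c • w = (u + w) - (b' • u + c' • w) := by
        rw [← h3]; module
      rw [h4]; module
    obtain ⟨he1, he2⟩ := coord_unique h heq
    exact ⟨b, c, hb, hc, by linarith, rfl⟩
  have hP : volume (parallelepiped ![u, w]) = ENNReal.ofReal |cr u w| := vol_par u w
  have hkey : volume T + volume T = ENNReal.ofReal |cr u w| := by
    rw [← hP, hPT, ← hvolT']
    nth_rewrite 1 [hvolT']
    rw [← measure_union_add_inter T hT'm, hinter, add_zero]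
  have hfin : volume T ≠ ⊤ := hTcompact.measure_lt_top.ne
  have hkey2 : (volume T).toReal + (volume T).toReal = |cr u w| := by
    rw [← ENNReal.toReal_add hfin hfin, hkey, ENNReal.toReal_ofReal (abs_nonneg _)]
  linarith

lemma triArea_vol (X Y Z : EuclideanSpace ℝ (Fin 2)) (h : cr (Y - X) (Z - X) ≠ 0) :
    (volume (convexHull ℝ ({X, Y, Z} : Set (EuclideanSpace ℝ (Fin 2))))).toReal
      = |cr (Y - X) (Z - X)| / 2 := by
  have himg : ({X, Y, Z} : Set (EuclideanSpace ℝ (Fin 2)))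
      = (fun p => X + p) '' {0, Y - X, Z - X} := by
    simp [Set.image_insert_eq, Set.image_singleton]
  have hpre : ∀ Q : Set (EuclideanSpace ℝ (Fin 2)),
      (fun p => X + p) '' Q = (fun y => -X + y) ⁻¹' Q := by
    intro Q
    exact congrFun (Set.image_eq_preimage_of_inverse
      (f := fun p : EuclideanSpace ℝ (Fin 2) => X + p)
      (g := fun y : EuclideanSpace ℝ (Fin 2) => -X + y)
      (fun p => by simp) (fun p => by simp)) Q
  have haff : convexHull ℝ ((fun p => X + p) '' {0, Y - X, Z - X})
      = (fun p => X + p) '' (convexHull ℝ {0, Y - X, Z - X}) := by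
    rw [← Set.singleton_add, ← Set.singleton_add, convexHull_add, convexHull_singleton]
  rw [himg, haff, hpre, measure_preimage_add]
  exact vol_tri0 _ _ h



lemma cr_zero_dep {u v : EuclideanSpace ℝ (Fin 2)} (hu : u ≠ 0) (h : cr u v = 0) :
    ∃ k : ℝ, v = k • u := by
  have hne : u 0 ^ 2 + u 1 ^ 2 ≠ 0 := by
    intro hz
    apply hu
    have h0 : u 0 = 0 := by nlinarith [sq_nonneg (u 0), sq_nonneg (u 1)]
    have h1 : u 1 = 0 := by nlinarith [sq_nonneg (u 0), sq_nonneg (u 1)]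
    ext i
    fin_cases i <;> assumption
  refine ⟨(u 0 * v 0 + u 1 * v 1) / (u 0 ^ 2 + u 1 ^ 2), ?_⟩
  simp only [cr] at h
  ext i
  fin_cases i
  · show v 0 = _ * u 0
    field_simp
    linear_combination (-(u 1)) * h
  · show v 1 = _ * u 1
    field_simp
    linear_combination (u 0) * h

lemma cr_eq_zero_iff_mem {B C X : EuclideanSpace ℝ (Fin 2)} (hBC : B ≠ C) :
    X ∈ affineSpan ℝ ({B, C} : Set (EuclideanSpace ℝ (Fin 2))) ↔ cr (C - B) (X - B) = 0 := by
  constructor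
  · intro hX
    have hX' : (X - B) +ᵥ B ∈ affineSpan ℝ ({B, C} : Set (EuclideanSpace ℝ (Fin 2))) := by
      simpa using hX
    rw [vadd_left_mem_affineSpan_pair] at hX'
    obtain ⟨r, hr⟩ := hX'
    rw [← hr, vsub_eq_sub]
    simp [cr]
    ring
  · intro h
    have hu : C - B ≠ 0 := sub_ne_zero.2 (Ne.symm hBC)
    obtain ⟨k, hk⟩ := cr_zero_dep hu h
    have : X = k • (C -ᵥ B) +ᵥ B := by
      rw [vsub_eq_sub, vadd_eq_add, ← hk]
      abel
    rw [this]
    exact smul_vsub_vadd_mem_affineSpan_pair k B C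

lemma cr_smul (u v : EuclideanSpace ℝ (Fin 2)) (r : ℝ) : cr u (r • v) = r * cr u v := by
  simp [cr]; ring

lemma soppside_cr {B C X Y : EuclideanSpace ℝ (Fin 2)} (hBC : B ≠ C)
    (hs : (affineSpan ℝ ({B, C} : Set (EuclideanSpace ℝ (Fin 2)))).SOppSide X Y) :
    cr (C - B) (X - B) * cr (C - B) (Y - B) < 0 := by
  obtain ⟨⟨p₁, hp₁, p₂, hp₂, hray⟩, hX, hY⟩ := hs
  have hα : cr (C - B) (X - B) ≠ 0 := fun h => hX ((cr_eq_zero_iff_mem hBC).2 h)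
  have hβ : cr (C - B) (Y - B) ≠ 0 := fun h => hY ((cr_eq_zero_iff_mem hBC).2 h)
  have hcp₁ : cr (C - B) (p₁ - B) = 0 := (cr_eq_zero_iff_mem hBC).1 hp₁
  have hcp₂ : cr (C - B) (p₂ - B) = 0 := (cr_eq_zero_iff_mem hBC).1 hp₂
  rcases hray with h0 | h0 | ⟨r₁, r₂, hr₁, hr₂, hr⟩
  · rw [vsub_eq_zero_iff_eq] at h0
    exact (hX (h0 ▸ hp₁)).elim
  · rw [vsub_eq_zero_iff_eq] at h0
    exact (hY (h0 ▸ hp₂)).elim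
  · have hcr := congrArg (cr (C - B)) hr
    rw [cr_smul, cr_smul] at hcr
    have e1 : cr (C - B) (X -ᵥ p₁) = cr (C - B) (X - B) - cr (C - B) (p₁ - B) := by
      rw [vsub_eq_sub]; simp only [cr]
      simp only [PiLp.sub_apply]
      ring
    have e2 : cr (C - B) (p₂ -ᵥ Y) = cr (C - B) (p₂ - B) - cr (C - B) (Y - B) := by
      rw [vsub_eq_sub]; simp only [cr]
      simp only [PiLp.sub_apply]
      ring
    rw [e1, e2, hcp₁, hcp₂, sub_zero, zero_sub] at hcr
    have hb2 : (0:ℝ) < cr (C - B) (Y - B) ^ 2 := by positivity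
    have key : cr (C - B) (X - B) * cr (C - B) (Y - B)
        = -(r₂/r₁) * cr (C - B) (Y - B) ^ 2 := by
      field_simp
      linear_combination hcr
    have hpos : 0 < (r₂/r₁) * cr (C - B) (Y - B) ^ 2 := by positivity
    linarith

lemma indep_cr {A B C : EuclideanSpace ℝ (Fin 2)} (h : AffineIndependent ℝ ![A, B, C]) :
    cr (B - A) (C - A) ≠ 0 := by
  intro h0
  rw [affineIndependent_iff_not_collinear] at h
  apply h
  have hrange : Set.range ![A, B, C] = {A, B, C} := by
    ext x
    simp only [Set.mem_range, Set.mem_insert_iff, Set.mem_singleton_iff]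
    constructor
    · rintro ⟨i, rfl⟩
      fin_cases i <;> simp
    · rintro (rfl | rfl | rfl)
      exacts [⟨0, by simp⟩, ⟨1, by simp⟩, ⟨2, by simp⟩]
  rw [hrange]
  have hmemA : A ∈ ({A, B, C} : Set (EuclideanSpace ℝ (Fin 2))) := Set.mem_insert A {B, C}
  by_cases hBA : B - A = 0
  · by_cases hCA : C - A = 0
    · refine (collinear_iff_of_mem hmemA).2 ⟨0, ?_⟩
      intro p hp
      simp only [Set.mem_insert_iff, Set.mem_singleton_iff] at hp
      have hB : B = A := by rw [← sub_eq_zero]; exact hBA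
      have hC : C = A := by rw [← sub_eq_zero]; exact hCA
      rcases hp with rfl | rfl | rfl
      · exact ⟨0, by simp⟩
      · exact ⟨0, by simp [hB]⟩
      · exact ⟨0, by simp [hC]⟩
    · refine (collinear_iff_of_mem hmemA).2 ⟨C - A, ?_⟩
      intro p hp
      simp only [Set.mem_insert_iff, Set.mem_singleton_iff] at hp
      have hB : B = A := by rw [← sub_eq_zero]; exact hBA
      rcases hp with rfl | rfl | rfl
      · exact ⟨0, by simp⟩
      · exact ⟨0, by simp [hB]⟩
      · exact ⟨1, by rw [vadd_eq_add]; module⟩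
  · obtain ⟨k, hk⟩ := cr_zero_dep hBA h0
    refine (collinear_iff_of_mem hmemA).2 ⟨B - A, ?_⟩
    intro p hp
    simp only [Set.mem_insert_iff, Set.mem_singleton_iff] at hp
    rcases hp with rfl | rfl | rfl
    · exact ⟨0, by simp⟩
    · exact ⟨1, by rw [vadd_eq_add]; module⟩
    · exact ⟨k, by rw [vadd_eq_add, ← hk]; module⟩


lemma dist_sq_coords (P Q : EuclideanSpace ℝ (Fin 2)) :
    dist P Q ^ 2 = (P 0 - Q 0)^2 + (P 1 - Q 1)^2 := by
  rw [EuclideanSpace.dist_eq, Real.sq_sqrt (by positivity)]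
  simp [Fin.sum_univ_two, Real.dist_eq, sq_abs]

lemma coord_sq_pos {P Q : EuclideanSpace ℝ (Fin 2)} (h : P ≠ Q) :
    0 < (P 0 - Q 0)^2 + (P 1 - Q 1)^2 := by
  rcases lt_or_eq_of_le (by positivity : (0:ℝ) ≤ (P 0 - Q 0)^2 + (P 1 - Q 1)^2) with h'|h'
  · exact h'
  · exfalso; apply h
    have h0 : P 0 = Q 0 := by nlinarith [sq_nonneg (P 0 - Q 0), sq_nonneg (P 1 - Q 1)]
    have h1 : P 1 = Q 1 := by nlinarith [sq_nonneg (P 0 - Q 0), sq_nonneg (P 1 - Q 1)]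
    ext i; fin_cases i <;> assumption

lemma prod_pos_sq {x y : ℝ} (hx : x^2 = 3/4) (hy : y^2 = 3/4) (hxy : 0 < x*y) :
    x*y = 3/4 := by
  have h : (x*y - 3/4)*(x*y + 3/4) = 0 := by linear_combination y^2 * hx + (3/4) * hy
  rcases mul_eq_zero.1 h with h'|h' <;> linarith

lemma triArea_eq (X Y Z : EuclideanSpace ℝ (Fin 2)) (h : cr (Y - X) (Z - X) ≠ 0) :
    triArea X Y Z = |cr (Y - X) (Z - X)| / 2 :=
  triArea_vol X Y Z h


lemma sign_pos_of_mul_neg {d x : ℝ} (hd : d < 0) (h : d * x < 0) : 0 < x := by nlinarith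
lemma sign_neg_of_mul_neg {d x : ℝ} (hd : 0 < d) (h : d * x < 0) : x < 0 := by nlinarith
lemma mul_pos_of_mul_neg {d x y : ℝ} (hx : d * x < 0) (hy : d * y < 0) : 0 < x * y := by
  nlinarith [mul_pos_of_neg_of_neg hx hy, sq_nonneg d, sq_nonneg (x*y)]

set_option maxHeartbeats 1600000 in
theorem napoleon_outer_area
    (A B C A₁ B₁ C₁ : EuclideanSpace ℝ (Fin 2))
    (hABC : AffineIndependent ℝ ![A, B, C])
    (hA₁ : dist A₁ B = dist B C) (hA₁' : dist A₁ C = dist B C)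
    (hB₁ : dist A B₁ = dist A C) (hB₁' : dist B₁ C = dist A C)
    (hC₁ : dist A C₁ = dist A B) (hC₁' : dist B C₁ = dist A B)
    (hsideA : (affineSpan ℝ {B, C}).SOppSide A A₁)
    (hsideB : (affineSpan ℝ {C, A}).SOppSide B B₁)
    (hsideC : (affineSpan ℝ {A, B}).SOppSide C C₁)
    (G₁ G₂ G₃ : EuclideanSpace ℝ (Fin 2))
    (hG₁ : G₁ = (3:ℝ)⁻¹ • (A₁ + B + C))
    (hG₂ : G₂ = (3:ℝ)⁻¹ • (A + B₁ + C))
    (hG₃ : G₃ = (3:ℝ)⁻¹ • (A + B + C₁)) :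
    triArea G₁ G₂ G₃ =
      (1/2) * triArea A B C + (1/6) * (triArea A₁ B C + triArea A B₁ C + triArea A B C₁) := by
  have hAB : A ≠ B := by
    intro h
    have := hABC.injective (a₁ := 0) (a₂ := 1) (by simpa using h)
    simp at this
  have hBC : B ≠ C := by
    intro h
    have := hABC.injective (a₁ := 1) (a₂ := 2) (by simpa using h)
    simp at this
  have hCA : C ≠ A := by
    intro h
    have := hABC.injective (a₁ := 2) (a₂ := 0) (by simpa using h)
    simp at this
  obtain ⟨DD, hDD⟩ : ∃ x : ℝ, x = (B 0 - A 0) * (C 1 - A 1) - (B 1 - A 1) * (C 0 - A 0) := ⟨_, rfl⟩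
  have hDDcr : cr (B - A) (C - A) = DD := by
    rw [hDD]; simp only [cr, PiLp.sub_apply]
  have hDD0 : DD ≠ 0 := by
    rw [← hDDcr]; exact indep_cr hABC

  -- block for vertex A₁
  have hsq1a : (A₁ 0 - B 0)^2 + (A₁ 1 - B 1)^2 = (B 0 - C 0)^2 + (B 1 - C 1)^2 := by
    have h2 : dist A₁ B ^ 2 = dist B C ^ 2 := by rw [hA₁]
    rw [dist_sq_coords, dist_sq_coords] at h2
    linear_combination h2
  have hsq2a : (A₁ 0 - C 0)^2 + (A₁ 1 - C 1)^2 = (B 0 - C 0)^2 + (B 1 - C 1)^2 := by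
    have h2 : dist A₁ C ^ 2 = dist B C ^ 2 := by rw [hA₁']
    rw [dist_sq_coords, dist_sq_coords] at h2
    linear_combination h2
  have hsa : 0 < ((B 0 - C 0)^2 + (B 1 - C 1)^2) := coord_sq_pos hBC
  have hdota : (C 0 - B 0)*(A₁ 0 - B 0) + (C 1 - B 1)*(A₁ 1 - B 1)
      = ((B 0 - C 0)^2 + (B 1 - C 1)^2)/2 := by
    linear_combination (hsq1a - hsq2a)/2
  have ht2a : ((C 0 - B 0) * (A₁ 1 - B 1) - (C 1 - B 1) * (A₁ 0 - B 0))^2 = 3/4 * ((B 0 - C 0)^2 + (B 1 - C 1)^2)^2 := by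
    linear_combination ((B 0 - C 0)^2 + (B 1 - C 1)^2) * hsq1a
      - ((C 0 - B 0)*(A₁ 0 - B 0) + (C 1 - B 1)*(A₁ 1 - B 1) + ((B 0 - C 0)^2 + (B 1 - C 1)^2)/2) * hdota
  have hsidea : DD * ((C 0 - B 0) * (A₁ 1 - B 1) - (C 1 - B 1) * (A₁ 0 - B 0)) < 0 := by
    have h1 := soppside_cr hBC hsideA
    have e1 : cr (C - B) (A - B) = DD := by
      rw [hDD]; simp only [cr, PiLp.sub_apply]; try ring
    have e2 : cr (C - B) (A₁ - B) = ((C 0 - B 0) * (A₁ 1 - B 1) - (C 1 - B 1) * (A₁ 0 - B 0)) := by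
      simp only [cr, PiLp.sub_apply]
    rw [e1, e2] at h1
    exact h1
  obtain ⟨pa, hpa⟩ : ∃ x : ℝ, x = ((C 0 - B 0) * (A₁ 1 - B 1) - (C 1 - B 1) * (A₁ 0 - B 0)) / ((B 0 - C 0)^2 + (B 1 - C 1)^2) := ⟨_, rfl⟩
  have hV0a : A₁ 0 = B 0 + (C 0 - B 0)/2 - pa * (C 1 - B 1) := by
    rw [hpa]
    field_simp [hsa.ne']
    linear_combination (2*(C 0 - B 0)) * hdota
  have hV1a : A₁ 1 = B 1 + (C 1 - B 1)/2 + pa * (C 0 - B 0) := by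
    rw [hpa]
    field_simp [hsa.ne']
    linear_combination (2*(C 1 - B 1)) * hdota
  have hp2a : pa^2 = 3/4 := by
    rw [hpa, div_pow, ht2a]
    field_simp [hsa.ne']
  have hDpa : DD * pa < 0 := by
    rw [hpa, mul_div_assoc']
    exact div_neg_of_neg_of_pos hsidea hsa
  have hcrva : ((C 0 - B 0) * (A₁ 1 - B 1) - (C 1 - B 1) * (A₁ 0 - B 0)) = pa * ((B 0 - C 0)^2 + (B 1 - C 1)^2) := by
    rw [hpa]
    field_simp [hsa.ne']


  -- block for vertex B₁
  have hsq1b : (B₁ 0 - C 0)^2 + (B₁ 1 - C 1)^2 = (C 0 - A 0)^2 + (C 1 - A 1)^2 := by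
    have h2 : dist B₁ C ^ 2 = dist A C ^ 2 := by rw [hB₁']
    rw [dist_sq_coords, dist_sq_coords] at h2
    linear_combination h2
  have hsq2b : (B₁ 0 - A 0)^2 + (B₁ 1 - A 1)^2 = (C 0 - A 0)^2 + (C 1 - A 1)^2 := by
    have h2 : dist A B₁ ^ 2 = dist A C ^ 2 := by rw [hB₁]
    rw [dist_sq_coords, dist_sq_coords] at h2
    linear_combination h2
  have hsb : 0 < ((C 0 - A 0)^2 + (C 1 - A 1)^2) := coord_sq_pos hCA
  have hdotb : (A 0 - C 0)*(B₁ 0 - C 0) + (A 1 - C 1)*(B₁ 1 - C 1)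
      = ((C 0 - A 0)^2 + (C 1 - A 1)^2)/2 := by
    linear_combination (hsq1b - hsq2b)/2
  have ht2b : ((A 0 - C 0) * (B₁ 1 - C 1) - (A 1 - C 1) * (B₁ 0 - C 0))^2 = 3/4 * ((C 0 - A 0)^2 + (C 1 - A 1)^2)^2 := by
    linear_combination ((C 0 - A 0)^2 + (C 1 - A 1)^2) * hsq1b
      - ((A 0 - C 0)*(B₁ 0 - C 0) + (A 1 - C 1)*(B₁ 1 - C 1) + ((C 0 - A 0)^2 + (C 1 - A 1)^2)/2) * hdotb
  have hsideb : DD * ((A 0 - C 0) * (B₁ 1 - C 1) - (A 1 - C 1) * (B₁ 0 - C 0)) < 0 := by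
    have h1 := soppside_cr hCA hsideB
    have e1 : cr (A - C) (B - C) = DD := by
      rw [hDD]; simp only [cr, PiLp.sub_apply]; try ring
    have e2 : cr (A - C) (B₁ - C) = ((A 0 - C 0) * (B₁ 1 - C 1) - (A 1 - C 1) * (B₁ 0 - C 0)) := by
      simp only [cr, PiLp.sub_apply]
    rw [e1, e2] at h1
    exact h1
  obtain ⟨pb, hpb⟩ : ∃ x : ℝ, x = ((A 0 - C 0) * (B₁ 1 - C 1) - (A 1 - C 1) * (B₁ 0 - C 0)) / ((C 0 - A 0)^2 + (C 1 - A 1)^2) := ⟨_, rfl⟩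
  have hV0b : B₁ 0 = C 0 + (A 0 - C 0)/2 - pb * (A 1 - C 1) := by
    rw [hpb]
    field_simp [hsb.ne']
    linear_combination (2*(A 0 - C 0)) * hdotb
  have hV1b : B₁ 1 = C 1 + (A 1 - C 1)/2 + pb * (A 0 - C 0) := by
    rw [hpb]
    field_simp [hsb.ne']
    linear_combination (2*(A 1 - C 1)) * hdotb
  have hp2b : pb^2 = 3/4 := by
    rw [hpb, div_pow, ht2b]
    field_simp [hsb.ne']
  have hDpb : DD * pb < 0 := by
    rw [hpb, mul_div_assoc']
    exact div_neg_of_neg_of_pos hsideb hsb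
  have hcrvb : ((A 0 - C 0) * (B₁ 1 - C 1) - (A 1 - C 1) * (B₁ 0 - C 0)) = pb * ((C 0 - A 0)^2 + (C 1 - A 1)^2) := by
    rw [hpb]
    field_simp [hsb.ne']


  -- block for vertex C₁
  have hsq1c : (C₁ 0 - A 0)^2 + (C₁ 1 - A 1)^2 = (A 0 - B 0)^2 + (A 1 - B 1)^2 := by
    have h2 : dist A C₁ ^ 2 = dist A B ^ 2 := by rw [hC₁]
    rw [dist_sq_coords, dist_sq_coords] at h2
    linear_combination h2
  have hsq2c : (C₁ 0 - B 0)^2 + (C₁ 1 - B 1)^2 = (A 0 - B 0)^2 + (A 1 - B 1)^2 := by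
    have h2 : dist B C₁ ^ 2 = dist A B ^ 2 := by rw [hC₁']
    rw [dist_sq_coords, dist_sq_coords] at h2
    linear_combination h2
  have hsc : 0 < ((A 0 - B 0)^2 + (A 1 - B 1)^2) := coord_sq_pos hAB
  have hdotc : (B 0 - A 0)*(C₁ 0 - A 0) + (B 1 - A 1)*(C₁ 1 - A 1)
      = ((A 0 - B 0)^2 + (A 1 - B 1)^2)/2 := by
    linear_combination (hsq1c - hsq2c)/2
  have ht2c : ((B 0 - A 0) * (C₁ 1 - A 1) - (B 1 - A 1) * (C₁ 0 - A 0))^2 = 3/4 * ((A 0 - B 0)^2 + (A 1 - B 1)^2)^2 := by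
    linear_combination ((A 0 - B 0)^2 + (A 1 - B 1)^2) * hsq1c
      - ((B 0 - A 0)*(C₁ 0 - A 0) + (B 1 - A 1)*(C₁ 1 - A 1) + ((A 0 - B 0)^2 + (A 1 - B 1)^2)/2) * hdotc
  have hsidec : DD * ((B 0 - A 0) * (C₁ 1 - A 1) - (B 1 - A 1) * (C₁ 0 - A 0)) < 0 := by
    have h1 := soppside_cr hAB hsideC
    have e1 : cr (B - A) (C - A) = DD := by
      rw [hDD]; simp only [cr, PiLp.sub_apply]; try ring
    have e2 : cr (B - A) (C₁ - A) = ((B 0 - A 0) * (C₁ 1 - A 1) - (B 1 - A 1) * (C₁ 0 - A 0)) := by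
      simp only [cr, PiLp.sub_apply]
    rw [e1, e2] at h1
    exact h1
  obtain ⟨pc, hpc⟩ : ∃ x : ℝ, x = ((B 0 - A 0) * (C₁ 1 - A 1) - (B 1 - A 1) * (C₁ 0 - A 0)) / ((A 0 - B 0)^2 + (A 1 - B 1)^2) := ⟨_, rfl⟩
  have hV0c : C₁ 0 = A 0 + (B 0 - A 0)/2 - pc * (B 1 - A 1) := by
    rw [hpc]
    field_simp [hsc.ne']
    linear_combination (2*(B 0 - A 0)) * hdotc
  have hV1c : C₁ 1 = A 1 + (B 1 - A 1)/2 + pc * (B 0 - A 0) := by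
    rw [hpc]
    field_simp [hsc.ne']
    linear_combination (2*(B 1 - A 1)) * hdotc
  have hp2c : pc^2 = 3/4 := by
    rw [hpc, div_pow, ht2c]
    field_simp [hsc.ne']
  have hDpc : DD * pc < 0 := by
    rw [hpc, mul_div_assoc']
    exact div_neg_of_neg_of_pos hsidec hsc
  have hcrvc : ((B 0 - A 0) * (C₁ 1 - A 1) - (B 1 - A 1) * (C₁ 0 - A 0)) = pc * ((A 0 - B 0)^2 + (A 1 - B 1)^2) := by
    rw [hpc]
    field_simp [hsc.ne']

  have hpab : pa * pb = 3/4 := prod_pos_sq hp2a hp2b (mul_pos_of_mul_neg hDpa hDpb)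
  have hpbc : pb * pc = 3/4 := prod_pos_sq hp2b hp2c (mul_pos_of_mul_neg hDpb hDpc)
  have hpca : pc * pa = 3/4 := prod_pos_sq hp2c hp2a (mul_pos_of_mul_neg hDpc hDpa)
  have hdetG : cr (G₂ - G₁) (G₃ - G₁)
      = DD/2 - (pa * ((B 0 - C 0)^2 + (B 1 - C 1)^2) + pb * ((C 0 - A 0)^2 + (C 1 - A 1)^2) + pc * ((A 0 - B 0)^2 + (A 1 - B 1)^2))/6 := by
    rw [hG₁, hG₂, hG₃, hDD]
    simp only [cr, PiLp.sub_apply, PiLp.add_apply, PiLp.smul_apply, smul_eq_mul]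
    rw [hV0a, hV1a, hV0b, hV1b, hV0c, hV1c]
    linear_combination (((B 0 - A 0) * (C 1 - A 1) - (B 1 - A 1) * (C 0 - A 0))/9) * hpab + (((B 0 - A 0) * (C 1 - A 1) - (B 1 - A 1) * (C 0 - A 0))/9) * hpbc + (((B 0 - A 0) * (C 1 - A 1) - (B 1 - A 1) * (C 0 - A 0))/9) * hpca
  have eA1 : cr (B - A₁) (C - A₁) = pa * ((B 0 - C 0)^2 + (B 1 - C 1)^2) := by
    simp only [cr, PiLp.sub_apply]
    linear_combination hcrva
  have eB1 : cr (B₁ - A) (C - A) = pb * ((C 0 - A 0)^2 + (C 1 - A 1)^2) := by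
    simp only [cr, PiLp.sub_apply]
    linear_combination hcrvb
  have eC1 : cr (B - A) (C₁ - A) = pc * ((A 0 - B 0)^2 + (A 1 - B 1)^2) := by
    simp only [cr, PiLp.sub_apply]
    linear_combination hcrvc
  have hpa0 : pa * ((B 0 - C 0)^2 + (B 1 - C 1)^2) ≠ 0 := by
    intro h
    rcases mul_eq_zero.1 h with h'|h'
    · rw [h'] at hDpa; simp at hDpa
    · linarith [hsa]
  have hpb0 : pb * ((C 0 - A 0)^2 + (C 1 - A 1)^2) ≠ 0 := by
    intro h
    rcases mul_eq_zero.1 h with h'|h'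
    · rw [h'] at hDpb; simp at hDpb
    · linarith [hsb]
  have hpc0 : pc * ((A 0 - B 0)^2 + (A 1 - B 1)^2) ≠ 0 := by
    intro h
    rcases mul_eq_zero.1 h with h'|h'
    · rw [h'] at hDpc; simp at hDpc
    · linarith [hsc]
  rw [triArea_eq A B C (by rw [hDDcr]; exact hDD0), hDDcr]
  rw [triArea_eq A₁ B C (by rw [eA1]; exact hpa0), eA1]
  rw [triArea_eq A B₁ C (by rw [eB1]; exact hpb0), eB1]
  rw [triArea_eq A B C₁ (by rw [eC1]; exact hpc0), eC1]
  rcases lt_or_gt_of_ne hDD0 with hD | hD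
  · have hpa : 0 < pa := sign_pos_of_mul_neg hD hDpa
    have hpb : 0 < pb := sign_pos_of_mul_neg hD hDpb
    have hpc : 0 < pc := sign_pos_of_mul_neg hD hDpc
    have h1 : 0 < pa * ((B 0 - C 0)^2 + (B 1 - C 1)^2) := mul_pos hpa hsa
    have h2 : 0 < pb * ((C 0 - A 0)^2 + (C 1 - A 1)^2) := mul_pos hpb hsb
    have h3 : 0 < pc * ((A 0 - B 0)^2 + (A 1 - B 1)^2) := mul_pos hpc hsc
    have hneg : cr (G₂ - G₁) (G₃ - G₁) < 0 := by rw [hdetG]; linarith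
    rw [triArea_eq G₁ G₂ G₃ (ne_of_lt hneg), abs_of_neg hneg, hdetG,
      abs_of_neg hD, abs_of_pos h1, abs_of_pos h2, abs_of_pos h3]
    ring
  · have hpa : pa < 0 := sign_neg_of_mul_neg hD hDpa
    have hpb : pb < 0 := sign_neg_of_mul_neg hD hDpb
    have hpc : pc < 0 := sign_neg_of_mul_neg hD hDpc
    have h1 : pa * ((B 0 - C 0)^2 + (B 1 - C 1)^2) < 0 := mul_neg_of_neg_of_pos hpa hsa
    have h2 : pb * ((C 0 - A 0)^2 + (C 1 - A 1)^2) < 0 := mul_neg_of_neg_of_pos hpb hsb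
    have h3 : pc * ((A 0 - B 0)^2 + (A 1 - B 1)^2) < 0 := mul_neg_of_neg_of_pos hpc hsc
    have hpos : 0 < cr (G₂ - G₁) (G₃ - G₁) := by rw [hdetG]; linarith
    rw [triArea_eq G₁ G₂ G₃ (ne_of_gt hpos), abs_of_pos hpos, hdetG,
      abs_of_pos hD, abs_of_neg h1, abs_of_neg h2, abs_of_neg h3]
    ring
end
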